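/- Under the stated assumptions, fix β_0 ∈ (0, β) and set ε_n = n^{−β_0/α}. Then there exists a constant C > 0 such that for all n ≥ 1, ∫_0^1 q^{1−ρ} L(1/q) · F̄(a_n ε_n q^{1/α'}) dq ≤ C (a_n ε_n)^{−α}. (Probabilistically: P(|X|/(a_n q^{1/α'}) > ε_n, η_1^{(q)} = 1) ≤ C (a_n ε_n)^{−α}, where given q the variable η_1^{(q)} is Bernoulli(q) and |X| has tail function F̄.) -/

import Mathlib

open Filter Set MeasureTheory
open scoped ENNReal

lemma measure_tendsto_zero_aux {A : ℕ → Set ℝ} (hA : ∀ k, MeasurableSet (A k))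
    (hsub : ∀ k, A k ⊆ Set.Icc (0:ℝ) 2) (h : ∀ s : ℝ, ∀ᶠ k in atTop, s ∉ A k) :
    Tendsto (fun k => volume (A k)) atTop (nhds 0) := by
  set C : ℕ → Set ℝ := fun k => ⋃ j : ℕ, A (k + j) with hC
  have hCmeas : ∀ k, MeasurableSet (C k) := fun k => MeasurableSet.iUnion fun _ => hA _
  have hanti : Antitone C := by
    intro i j hij x hx
    simp only [hC, Set.mem_iUnion] at hx ⊢
    obtain ⟨l, hl⟩ := hx
    exact ⟨j - i + l, by rwa [show i + (j - i + l) = j + l by omega]⟩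
  have hint : ⋂ k, C k = (∅ : Set ℝ) := by
    ext x
    simp only [Set.mem_iInter, Set.mem_iUnion, Set.mem_empty_iff_false, iff_false]
    push_neg
    obtain ⟨K, hK⟩ := eventually_atTop.1 (h x)
    refine ⟨K, fun hx => ?_⟩
    obtain ⟨j, hj⟩ := Set.mem_iUnion.1 hx
    exact hK (K + j) (Nat.le_add_right _ _) hj
  have hfin : volume (C 0) ≠ ⊤ := by
    refine ne_top_of_le_ne_top ?_ (measure_mono (Set.iUnion_subset fun j => hsub _))
    simp [Real.volume_Icc]
  have hlim := tendsto_measure_iInter_atTop (fun k => (hCmeas k).nullMeasurableSet) hanti ⟨0, hfin⟩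
  rw [hint, measure_empty] at hlim
  refine tendsto_of_tendsto_of_tendsto_of_le_of_le tendsto_const_nhds hlim
    (fun k => zero_le) (fun k => measure_mono ?_)
  intro x hx
  exact Set.mem_iUnion.2 ⟨0, by simpa using hx⟩
lemma measurable_rpow_const_aux (p : ℝ) : Measurable fun q : ℝ => q ^ p := by
  have h : ∀ q : ℝ, q ^ p =
      if q < 0 then Real.exp (Real.log q * p) * Real.cos (p * Real.pi)
      else if q = 0 then (if p = 0 then 1 else 0)
      else Real.exp (Real.log q * p) := by
    intro q
    rcases lt_trichotomy q 0 with hq | hq | hq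
    · rw [if_pos hq, Real.rpow_def_of_neg hq, mul_comm p Real.pi]
    · subst hq
      rw [if_neg (lt_irrefl _), if_pos rfl]
      by_cases hp : p = 0
      · subst hp; simp
      · rw [if_neg hp, Real.zero_rpow hp]
    · rw [if_neg (not_lt.2 hq.le), if_neg (ne_of_gt hq), Real.rpow_def_of_pos hq]
  simp only [h]
  refine Measurable.ite (measurableSet_lt measurable_id measurable_const)
    (((Real.measurable_log.mul measurable_const).exp).mul measurable_const) ?_
  refine Measurable.ite ?_ measurable_const
    ((Real.measurable_log.mul measurable_const).exp)
  exact measurableSet_eq_fun measurable_id measurable_const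

lemma uct_aux (h : ℝ → ℝ) (hm : Measurable h)
    (hconv : ∀ u : ℝ, Tendsto (fun t => h (t + u) - h t) atTop (nhds 0))
    {ε : ℝ} (hε : 0 < ε) :
    ∃ T : ℝ, ∀ t, T ≤ t → ∀ u ∈ Set.Icc (0:ℝ) 1, |h (t + u) - h t| ≤ ε := by
  by_contra hcon
  push_neg at hcon
  choose t ht u hu hbig using fun k : ℕ => hcon k
  have htends : Tendsto t atTop atTop :=
    tendsto_atTop_mono ht tendsto_natCast_atTop_atTop
  have htends' : Tendsto (fun k => t k + u k) atTop atTop :=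
    tendsto_atTop_mono (fun k => le_add_of_nonneg_right (hu k).1) htends
  set A : ℕ → Set ℝ := fun k => Set.Icc (0:ℝ) 2 ∩ {x | ε/2 ≤ |h (t k + x) - h (t k)|} with hA
  set B : ℕ → Set ℝ := fun k =>
    Set.Icc (0:ℝ) 2 ∩ {x | ε/2 ≤ |h (t k + u k + x) - h (t k + u k)|} with hB
  have hmeas : ∀ (c : ℕ → ℝ) (k : ℕ),
      MeasurableSet (Set.Icc (0:ℝ) 2 ∩ {x | ε/2 ≤ |h (c k + x) - h (c k)|}) := by
    intro c k
    exact measurableSet_Icc.inter (measurableSet_le measurable_const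
      (((hm.comp (measurable_const.add measurable_id)).sub measurable_const).abs))
  have hAev : ∀ x : ℝ, ∀ᶠ k in atTop, x ∉ A k := by
    intro x
    have := ((hconv x).comp htends).abs
    simp only [Function.comp] at this
    rw [abs_zero] at this
    filter_upwards [this.eventually_lt_const (by linarith : (0:ℝ) < ε/2)] with k hk
    intro hx
    exact absurd hx.2 (not_le.2 (by simpa using hk))
  have hBev : ∀ x : ℝ, ∀ᶠ k in atTop, x ∉ B k := by
    intro x
    have := ((hconv x).comp htends').abs
    simp only [Function.comp] at this
    rw [abs_zero] at this
    filter_upwards [this.eventually_lt_const (by linarith : (0:ℝ) < ε/2)] with k hk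
    intro hx
    exact absurd hx.2 (not_le.2 (by simpa using hk))
  have hAz := measure_tendsto_zero_aux (fun k => hmeas t k) (fun k => Set.inter_subset_left) hAev
  have hBz := measure_tendsto_zero_aux (fun k => hmeas (fun k => t k + u k) k)
    (fun k => Set.inter_subset_left) hBev
  have hsum : Tendsto (fun k => volume (A k) + volume (B k)) atTop (nhds 0) := by
    simpa using hAz.add hBz
  obtain ⟨K, hK⟩ := (hsum.eventually_lt_const (by norm_num : (0:ℝ≥0∞) < 1)).exists
  -- subset claim
  have hsub : Set.Icc (u K) 2 ⊆ A K ∪ ((fun x => x + -(u K)) ⁻¹' B K) := by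
    intro x hx
    by_contra hx2
    have hxA : x ∉ A K := fun hc => hx2 (Or.inl hc)
    have hxB : x + -(u K) ∉ B K := fun hc => hx2 (Or.inr hc)
    have hx02 : x ∈ Set.Icc (0:ℝ) 2 := ⟨le_trans (hu K).1 hx.1, hx.2⟩
    have h1 : |h (t K + x) - h (t K)| < ε/2 := by
      by_contra hc; push_neg at hc; exact hxA ⟨hx02, hc⟩
    have hxu : x + -(u K) ∈ Set.Icc (0:ℝ) 2 :=
      ⟨by linarith [hx.1], by linarith [hx.2, (hu K).1]⟩
    have h2 : |h (t K + u K + (x + -(u K))) - h (t K + u K)| < ε/2 := by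
      by_contra hc; push_neg at hc; exact hxB ⟨hxu, hc⟩
    rw [show t K + u K + (x + -(u K)) = t K + x by ring] at h2
    have := hbig K
    have habs : |h (t K + u K) - h (t K)| ≤
        |h (t K + u K) - h (t K + x)| + |h (t K + x) - h (t K)| := by
      exact abs_sub_le _ (h (t K + x)) _
    rw [abs_sub_comm] at h2
    linarith
  have hvol : (1 : ℝ≥0∞) ≤ volume (A K) + volume (B K) := by
    calc (1:ℝ≥0∞) = ENNReal.ofReal 1 := by simp
    _ ≤ ENNReal.ofReal (2 - u K) := ENNReal.ofReal_le_ofReal (by linarith [(hu K).2])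
    _ = volume (Set.Icc (u K) 2) := by rw [Real.volume_Icc]
    _ ≤ volume (A K ∪ ((fun x => x + -(u K)) ⁻¹' B K)) := measure_mono hsub
    _ ≤ volume (A K) + volume ((fun x => x + -(u K)) ⁻¹' B K) := measure_union_le _ _
    _ = volume (A K) + volume (B K) := by rw [measure_preimage_add_right]
  exact absurd hK (not_lt.2 hvol)
lemma potter_aux (L : ℝ → ℝ) (hLmeas : Measurable L) (hLpos : ∀ x : ℝ, 0 < x → 0 < L x)
    (hLslow : ∀ c : ℝ, 0 < c → Tendsto (fun x : ℝ => L (c * x) / L x) atTop (nhds 1))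
    {δ : ℝ} (hδ : 0 < δ) :
    ∃ Y M : ℝ, 1 ≤ Y ∧ 0 < M ∧ ∀ y, Y ≤ y → L y ≤ M * y ^ δ := by
  set h : ℝ → ℝ := fun t => Real.log (L (Real.exp t)) with hh
  have hmeas : Measurable h := (hLmeas.comp Real.measurable_exp).log
  have hconv : ∀ u : ℝ, Tendsto (fun t => h (t + u) - h t) atTop (nhds 0) := by
    intro u
    have h1 : Tendsto (fun x : ℝ => L (Real.exp u * x) / L x) atTop (nhds 1) :=
      hLslow _ (Real.exp_pos u)
    have h2 := h1.comp Real.tendsto_exp_atTop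
    have h3 := (Real.continuousAt_log one_ne_zero).tendsto.comp h2
    rw [Real.log_one] at h3
    refine h3.congr fun t => ?_
    simp only [Function.comp]
    rw [Real.log_div (ne_of_gt (hLpos _ (by positivity)))
      (ne_of_gt (hLpos _ (Real.exp_pos t))), hh]
    simp only []
    rw [Real.exp_add, mul_comm (Real.exp t)]
  obtain ⟨T, hT⟩ := uct_aux h hmeas hconv hδ
  have key : ∀ n : ℕ, ∀ t : ℝ, T + n ≤ t → t ≤ T + n + 1 → h t ≤ h T + δ * (n + 1) := by
    intro n
    induction n with
    | zero =>
      intro t h1 h2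
      push_cast at h1 h2
      have h3 := hT T le_rfl (t - T) ⟨by linarith, by linarith⟩
      rw [show T + (t - T) = t by ring] at h3
      have h4 := (abs_le.1 h3).2
      push_cast
      linarith
    | succ n ih =>
      intro t h1 h2
      push_cast at h1 h2
      have hn : (0:ℝ) ≤ (n:ℝ) := Nat.cast_nonneg n
      have h3 := hT (t - 1) (by linarith) 1 ⟨zero_le_one, le_rfl⟩
      rw [show t - 1 + 1 = t by ring] at h3
      have h4 := ih (t - 1) (by linarith) (by linarith)
      have h5 := (abs_le.1 h3).2
      push_cast at h4 ⊢
      linarith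
  have key2 : ∀ t : ℝ, T ≤ t → h t ≤ h T + δ * (t - T) + δ := by
    intro t ht
    set n := ⌊t - T⌋₊ with hn
    have h0 : (0:ℝ) ≤ t - T := by linarith
    have h1 : (n:ℝ) ≤ t - T := Nat.floor_le h0
    have h2 : t - T < n + 1 := Nat.lt_floor_add_one _
    have h3 := key n t (by linarith) (by linarith)
    have h4 := mul_le_mul_of_nonneg_left h1 hδ.le
    linarith
  refine ⟨max (Real.exp T) 1, Real.exp (h T + δ * (1 - T)), le_max_right _ _,
    Real.exp_pos _, ?_⟩
  intro y hy
  have hy1 : (1:ℝ) ≤ y := le_trans (le_max_right _ _) hy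
  have hy0 : (0:ℝ) < y := lt_of_lt_of_le one_pos hy1
  have hT' : T ≤ Real.log y :=
    (Real.le_log_iff_exp_le hy0).2 (le_trans (le_max_left _ _) hy)
  have hkey := key2 (Real.log y) hT'
  have hhy : h (Real.log y) = Real.log (L y) := by rw [hh]; simp [Real.exp_log hy0]
  rw [hhy] at hkey
  have hLy : L y = Real.exp (Real.log (L y)) := (Real.exp_log (hLpos y hy0)).symm
  rw [hLy]
  calc Real.exp (Real.log (L y)) ≤ Real.exp (h T + δ * (Real.log y - T) + δ) :=
        Real.exp_le_exp.2 hkey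
    _ = Real.exp (h T + δ * (1 - T)) * Real.exp (Real.log y * δ) := by
        rw [← Real.exp_add]; ring_nf
    _ = Real.exp (h T + δ * (1 - T)) * y ^ δ := by rw [Real.rpow_def_of_pos hy0]
/-- The small-exceedance estimate: with `β₀ ∈ (0,β)` and `ε_n = n^{−β₀/α}`, there is
`C > 0` such that for all `n ≥ 1`,
`P(|X|/(a_n q^{1/α′}) > ε_n, η₁^{(q)} = 1)
  = ∫_0^1 q^{1−ρ} L(1/q) F̄(a_n ε_n q^{1/α′}) dq ≤ C (a_n ε_n)^{−α}`. -/
theorem small_exceedance_bound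
    (L : ℝ → ℝ) (hLmeas : Measurable L) (hLpos : ∀ x : ℝ, 0 < x → 0 < L x)
    (hLslow : ∀ c : ℝ, 0 < c → Tendsto (fun x : ℝ => L (c * x) / L x) atTop (nhds 1))
    (Fbar : ℝ → ℝ) (hFmono : AntitoneOn Fbar (Set.Ioi 0))
    (hFrange : ∀ x : ℝ, 0 < x → Fbar x ∈ Set.Icc (0:ℝ) 1)
    (α C_X α' ρ : ℝ) (hα : 0 < α) (hC : 0 < C_X)
    (hFtail : Tendsto (fun x : ℝ => x ^ α * Fbar x) atTop (nhds C_X))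
    (hα' : 0 < α') (hρ : ρ < 1)
    (β : ℝ) (hβdef : β = α / α' + ρ - 1) (hβ : β ∈ Set.Ioo (0:ℝ) 1)
    (m : ℕ → ℕ) (hmmono : StrictMono m) (hm1 : ∀ n, 1 ≤ m n)
    (hmgrow : Tendsto (fun n : ℕ => (m n : ℝ) * L n / (n : ℝ) ^ (1 - ρ)) atTop atTop)
    (a : ℕ → ℝ)
    (ha : ∀ n : ℕ, a n
      = (C_X * (Real.Gamma (1 - β) / β) * (n : ℝ) ^ β * (m n : ℝ) * L n) ^ (1 / α))
    (β₀ : ℝ) (hβ₀ : β₀ ∈ Set.Ioo (0:ℝ) β)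
    (ε : ℕ → ℝ) (hε : ∀ n : ℕ, ε n = (n : ℝ) ^ (-(β₀ / α))) :
    ∃ C : ℝ, 0 < C ∧ ∀ n : ℕ, 1 ≤ n →
      (∫ q in Set.Ioo (0:ℝ) 1, q ^ (1 - ρ) * L (1 / q) * Fbar (a n * ε n * q ^ (1 / α')))
        ≤ C * (a n * ε n) ^ (-α) := by
  obtain ⟨hβ0, hβ1⟩ := hβ
  obtain ⟨hβ₀0, hβ₀β⟩ := hβ₀
  have hγ : β + 1 - ρ = α / α' := by rw [hβdef]; ring
  have hγ0 : 0 < β + 1 - ρ := by linarith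
  have hΓ : 0 < Real.Gamma (1 - β) := Real.Gamma_pos_of_pos (by linarith)
  have hc₀ : 0 < C_X * (Real.Gamma (1 - β) / β) := by positivity
  -- positivity of a n * ε n
  have hspos : ∀ n : ℕ, 1 ≤ n → 0 < a n * ε n := by
    intro n hn
    have hn0 : (0:ℝ) < n := by exact_mod_cast hn
    have hL : 0 < L n := hLpos _ hn0
    have hmn : (0:ℝ) < m n := by exact_mod_cast hm1 n
    have hbase : 0 < C_X * (Real.Gamma (1 - β) / β) * (n:ℝ) ^ β * (m n : ℝ) * L n :=
      mul_pos (mul_pos (mul_pos hc₀ (Real.rpow_pos_of_pos hn0 β)) hmn) hL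
    have ha' : 0 < a n := by rw [ha]; exact Real.rpow_pos_of_pos hbase _
    have hε' : 0 < ε n := by rw [hε]; exact Real.rpow_pos_of_pos hn0 _
    exact mul_pos ha' hε'
  have hsnn : ∀ n : ℕ, 0 ≤ a n * ε n := by
    intro n
    rcases Nat.eq_zero_or_pos n with h0 | h1
    · subst h0
      have hε0 : ε 0 = 0 := by
        rw [hε]
        push_cast
        have : -(β₀/α) < 0 := by
          have : 0 < β₀/α := by positivity
          linarith
        exact Real.zero_rpow (ne_of_lt this)
      simp [hε0]
    · exact (hspos n h1).le
  -- Fbar tail facts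
  have hFub : ∃ x₁ : ℝ, 1 ≤ x₁ ∧ ∀ x, x₁ ≤ x → Fbar x ≤ 2 * C_X * x ^ (-α) := by
    have h1 : ∀ᶠ x : ℝ in atTop, x ^ α * Fbar x < 2 * C_X :=
      hFtail.eventually_lt_const (by linarith)
    obtain ⟨x₀, hx₀⟩ := eventually_atTop.1 h1
    refine ⟨max x₀ 1, le_max_right _ _, fun x hx => ?_⟩
    have hx1 : (1:ℝ) ≤ x := le_trans (le_max_right _ _) hx
    have hx0 : (0:ℝ) < x := lt_of_lt_of_le one_pos hx1
    have hxp : 0 < x ^ α := Real.rpow_pos_of_pos hx0 α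
    have h2 := (hx₀ x (le_trans (le_max_left _ _) hx)).le
    have h3 : Fbar x ≤ 2 * C_X / x ^ α := by
      rw [le_div_iff₀ hxp, mul_comm]
      linarith
    calc Fbar x ≤ 2 * C_X / x ^ α := h3
      _ = 2 * C_X * x ^ (-α) := by rw [Real.rpow_neg hx0.le, div_eq_mul_inv]
  have hFposx : ∀ x : ℝ, 0 < x → 0 < Fbar x := by
    have h1 : ∀ᶠ x : ℝ in atTop, C_X / 2 < x ^ α * Fbar x :=
      hFtail.eventually_const_lt (by linarith)
    obtain ⟨x₂, hx₂⟩ := eventually_atTop.1 h1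
    intro x hx
    set y := max x (max x₂ 1) with hy
    have hyx : x ≤ y := le_max_left _ _
    have hy1 : (1:ℝ) ≤ y := le_trans (le_max_right _ _) (le_max_right _ _)
    have hy0 : (0:ℝ) < y := lt_of_lt_of_le one_pos hy1
    have h2 := hx₂ y (le_trans (le_max_left _ _) (le_max_right _ _))
    have hyp : 0 < y ^ α := Real.rpow_pos_of_pos hy0 α
    have hFy : 0 < Fbar y := by
      by_contra hcon
      push_neg at hcon
      nlinarith
    exact lt_of_lt_of_le hFy
      (hFmono (Set.mem_Ioi.2 hx) (Set.mem_Ioi.2 (lt_of_lt_of_le hx hyx)) hyx)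
  obtain ⟨x₁, hx₁1, hx₁⟩ := hFub
  have hx₁0 : (0:ℝ) < x₁ := lt_of_lt_of_le one_pos hx₁1
  -- the slowly varying factor
  set φ : ℝ → ℝ := fun q => q ^ (1 - ρ) * L (1 / q) with hφdef
  have hφmeas : Measurable φ :=
    (measurable_rpow_const_aux _).mul (hLmeas.comp (measurable_const.div measurable_id))
  have hφnn : ∀ q ∈ Set.Ioo (0:ℝ) 1, 0 ≤ φ q := fun q hq =>
    mul_nonneg (Real.rpow_nonneg hq.1.le _) (hLpos (1/q) (one_div_pos.2 hq.1)).le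
  -- pointwise bound f ≤ φ
  have hfleφ : ∀ n : ℕ, 1 ≤ n → ∀ q ∈ Set.Ioo (0:ℝ) 1,
      q ^ (1 - ρ) * L (1 / q) * Fbar (a n * ε n * q ^ (1 / α')) ≤ φ q := by
    intro n hn q hq
    have harg : 0 < a n * ε n * q ^ (1/α') :=
      mul_pos (hspos n hn) (Real.rpow_pos_of_pos hq.1 _)
    exact mul_le_of_le_one_right (hφnn q hq) (hFrange _ harg).2
  have hfnn : ∀ n : ℕ, 1 ≤ n →
      0 ≤ᵐ[volume.restrict (Set.Ioo (0:ℝ) 1)]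
        fun q => q ^ (1 - ρ) * L (1 / q) * Fbar (a n * ε n * q ^ (1 / α')) := by
    intro n hn
    filter_upwards [ae_restrict_mem measurableSet_Ioo] with q hq
    have harg : 0 < a n * ε n * q ^ (1/α') :=
      mul_pos (hspos n hn) (Real.rpow_pos_of_pos hq.1 _)
    exact mul_nonneg (hφnn q hq) (hFrange _ harg).1
  by_cases hφint : IntegrableOn φ (Set.Ioo (0:ℝ) 1) volume
  swap
  · -- non-integrable case : all integrals vanish
    refine ⟨1, one_pos, fun n hn => ?_⟩
    have hsn := hspos n hn
    have hnint : ¬ IntegrableOn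
        (fun q => q ^ (1 - ρ) * L (1 / q) * Fbar (a n * ε n * q ^ (1 / α')))
        (Set.Ioo (0:ℝ) 1) volume := by
      intro hint
      apply hφint
      have hF0 : 0 < Fbar (a n * ε n) := hFposx _ hsn
      have hg : Integrable (fun q => (Fbar (a n * ε n))⁻¹ *
          (q ^ (1 - ρ) * L (1 / q) * Fbar (a n * ε n * q ^ (1 / α'))))
          (volume.restrict (Set.Ioo (0:ℝ) 1)) := hint.const_mul _
      refine hg.mono' hφmeas.aestronglyMeasurable ?_
      filter_upwards [ae_restrict_mem measurableSet_Ioo] with q hq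
      have hq1 : q ^ (1/α') ≤ 1 := Real.rpow_le_one hq.1.le hq.2.le (by positivity)
      have harg : 0 < a n * ε n * q ^ (1/α') :=
        mul_pos hsn (Real.rpow_pos_of_pos hq.1 _)
      have hle : a n * ε n * q ^ (1/α') ≤ a n * ε n :=
        mul_le_of_le_one_right hsn.le hq1
      have hmono : Fbar (a n * ε n) ≤ Fbar (a n * ε n * q ^ (1/α')) :=
        hFmono (Set.mem_Ioi.2 harg) (Set.mem_Ioi.2 hsn) hle
      have hφq := hφnn q hq
      rw [Real.norm_of_nonneg hφq]
      have h5 : φ q * Fbar (a n * ε n) ≤ φ q * Fbar (a n * ε n * q ^ (1/α')) :=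
        mul_le_mul_of_nonneg_left hmono hφq
      calc φ q = (Fbar (a n * ε n))⁻¹ * (φ q * Fbar (a n * ε n)) := by
            field_simp
        _ ≤ (Fbar (a n * ε n))⁻¹ *
            (φ q * Fbar (a n * ε n * q ^ (1/α'))) :=
            mul_le_mul_of_nonneg_left h5 (inv_nonneg.2 hF0.le)
        _ = (Fbar (a n * ε n))⁻¹ *
            (q ^ (1 - ρ) * L (1 / q) * Fbar (a n * ε n * q ^ (1 / α'))) := by
            rw [hφdef]
    rw [MeasureTheory.integral_undef hnint, one_mul]
    exact Real.rpow_nonneg (hsnn n) _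
  -- main case
  set K : ℝ := ∫ q in Set.Ioo (0:ℝ) 1, φ q with hKdef
  have hK0 : 0 ≤ K := setIntegral_nonneg measurableSet_Ioo hφnn
  set δ : ℝ := (1 - β) / 2 with hδdef
  have hδ0 : 0 < δ := by rw [hδdef]; linarith
  obtain ⟨Y, M, hY1, hM0, hPotter⟩ := potter_aux L hLmeas hLpos hLslow hδ0
  set c : ℝ := (2 * Y)⁻¹ with hcdef
  have hc0 : 0 < c := by positivity
  have hc1 : c < 1 := by rw [hcdef]; exact inv_lt_one_of_one_lt₀ (by linarith)
  have hcY : ∀ q : ℝ, 0 < q → q ≤ c → Y ≤ 1 / q := by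
    intro q hq hqc
    have hYne : Y ≠ 0 := by linarith
    have h2Y : Y * c = 2⁻¹ := by rw [hcdef]; field_simp
    rw [le_div_iff₀ hq]
    calc Y * q ≤ Y * c := mul_le_mul_of_nonneg_left hqc (by linarith)
      _ = 2⁻¹ := h2Y
      _ ≤ 1 := by norm_num
  -- a n * ε n  tends to infinity
  have hstend : Tendsto (fun n : ℕ => a n * ε n) atTop atTop := by
    have h1 : Tendsto (fun n : ℕ =>
        (C_X * (Real.Gamma (1 - β) / β)) ^ (1/α) * (n:ℝ) ^ ((β - β₀)/α)) atTop atTop := by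
      refine Tendsto.const_mul_atTop (Real.rpow_pos_of_pos hc₀ _) ?_
      exact (tendsto_rpow_atTop (div_pos (by linarith) hα)).comp tendsto_natCast_atTop_atTop
    refine tendsto_atTop_mono' atTop ?_ h1
    filter_upwards [hmgrow.eventually_ge_atTop 1, eventually_ge_atTop 1] with n hg hn1
    have hn0 : (0:ℝ) < n := by exact_mod_cast hn1
    have hn1' : (1:ℝ) ≤ n := by exact_mod_cast hn1
    have hpow : (0:ℝ) < (n:ℝ) ^ (1 - ρ) := Real.rpow_pos_of_pos hn0 _
    have hml : (n:ℝ) ^ (1 - ρ) ≤ (m n : ℝ) * L n := (one_le_div hpow).1 hg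
    have h1n : (1:ℝ) ≤ (n:ℝ) ^ (1 - ρ) := by
      simpa using Real.rpow_le_rpow_of_exponent_le hn1' (by linarith : (0:ℝ) ≤ 1 - ρ)
    have hmL : (1:ℝ) ≤ (m n : ℝ) * L n := le_trans h1n hml
    have hX : 0 < C_X * (Real.Gamma (1 - β) / β) * (n:ℝ) ^ β :=
      mul_pos hc₀ (Real.rpow_pos_of_pos hn0 β)
    have hb1 : C_X * (Real.Gamma (1 - β) / β) * (n:ℝ) ^ β
        ≤ C_X * (Real.Gamma (1 - β) / β) * (n:ℝ) ^ β * (m n : ℝ) * L n := by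
      calc C_X * (Real.Gamma (1 - β) / β) * (n:ℝ) ^ β
          ≤ C_X * (Real.Gamma (1 - β) / β) * (n:ℝ) ^ β * ((m n : ℝ) * L n) :=
            le_mul_of_one_le_right hX.le hmL
        _ = C_X * (Real.Gamma (1 - β) / β) * (n:ℝ) ^ β * (m n : ℝ) * L n := by ring
    have ha1 : (C_X * (Real.Gamma (1 - β) / β) * (n:ℝ) ^ β) ^ (1/α)
        ≤ (C_X * (Real.Gamma (1 - β) / β) * (n:ℝ) ^ β * (m n : ℝ) * L n) ^ (1/α) :=
      Real.rpow_le_rpow hX.le hb1 (by positivity)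
    have heq : (C_X * (Real.Gamma (1 - β) / β) * (n:ℝ) ^ β) ^ (1/α) * (n:ℝ) ^ (-(β₀/α))
        = (C_X * (Real.Gamma (1 - β) / β)) ^ (1/α) * (n:ℝ) ^ ((β - β₀)/α) := by
      rw [Real.mul_rpow hc₀.le (Real.rpow_nonneg hn0.le _), ← Real.rpow_mul hn0.le,
        mul_assoc, ← Real.rpow_add hn0]
      congr 1
      ring
    rw [ha n, hε n, ← heq]
    exact mul_le_mul_of_nonneg_right ha1 (Real.rpow_nonneg hn0.le _)
  obtain ⟨N, hN⟩ := eventually_atTop.1 (hstend.eventually_ge_atTop (x₁ * c ^ (-(1/α'))))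
  set p1 : ℝ := 1 - ρ - δ with hp1def
  have hp1 : (-1:ℝ) < p1 := by rw [hp1def, hδdef]; linarith
  have hp1' : (0:ℝ) < p1 + 1 := by linarith
  set p2 : ℝ := -(β + δ) with hp2def
  have hp2 : (-1:ℝ) < p2 := by rw [hp2def, hδdef]; linarith
  have hp2' : (0:ℝ) < p2 + 1 := by linarith
  set γ : ℝ := β + 1 - ρ with hγdef
  set C₀ : ℝ := M * x₁ ^ α / (p1 + 1)
      + 2 * C_X * (M * c ^ (p2 + 1) / (p2 + 1) + c ^ (-γ) * K) + 1 with hC₀def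
  have hC₀1 : 1 ≤ C₀ := by
    have h1 : 0 ≤ M * x₁ ^ α / (p1 + 1) := by positivity
    have h2 : 0 ≤ 2 * C_X * (M * c ^ (p2 + 1) / (p2 + 1) + c ^ (-γ) * K) := by positivity
    rw [hC₀def]; linarith
  set C : ℝ := C₀ + ∑ k ∈ Finset.range N, (K + 1) * (a k * ε k) ^ α with hCdef
  have hsum0 : 0 ≤ ∑ k ∈ Finset.range N, (K + 1) * (a k * ε k) ^ α :=
    Finset.sum_nonneg fun k _ =>
      mul_nonneg (by linarith) (Real.rpow_nonneg (hsnn k) α)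
  have hCpos : 0 < C := by rw [hCdef]; linarith
  refine ⟨C, hCpos, fun n hn => ?_⟩
  set sn : ℝ := a n * ε n with hsndef
  have hsn0 : 0 < sn := hspos n hn
  have hsninv : 0 ≤ sn ^ (-α) := Real.rpow_nonneg hsn0.le _
  by_cases hfint : IntegrableOn
      (fun q => q ^ (1 - ρ) * L (1 / q) * Fbar (sn * q ^ (1 / α')))
      (Set.Ioo (0:ℝ) 1) volume
  swap
  · rw [MeasureTheory.integral_undef hfint]
    positivity
  rcases lt_or_ge n N with hnN | hnN
  · -- small n : crude bound by K
    have h1 : (∫ q in Set.Ioo (0:ℝ) 1,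
        q ^ (1 - ρ) * L (1 / q) * Fbar (sn * q ^ (1 / α'))) ≤ K := by
      rw [hKdef]
      refine integral_mono_of_nonneg (hfnn n hn) hφint ?_
      exact (ae_restrict_iff' measurableSet_Ioo).2 (ae_of_all _ (hfleφ n hn))
    have h2 : (K + 1) * sn ^ α ≤ C := by
      rw [hCdef]
      have h3 : (K + 1) * sn ^ α ≤ ∑ k ∈ Finset.range N, (K + 1) * (a k * ε k) ^ α := by
        refine Finset.single_le_sum (f := fun k => (K + 1) * (a k * ε k) ^ α)
          (fun k _ => mul_nonneg (by linarith) (Real.rpow_nonneg (hsnn k) α))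
          (Finset.mem_range.2 hnN)
      linarith
    have hone : sn ^ α * sn ^ (-α) = 1 := by
      rw [← Real.rpow_add hsn0]; simp
    calc (∫ q in Set.Ioo (0:ℝ) 1,
        q ^ (1 - ρ) * L (1 / q) * Fbar (sn * q ^ (1 / α'))) ≤ K := h1
      _ ≤ (K + 1) * (sn ^ α * sn ^ (-α)) := by rw [hone]; linarith
      _ = ((K + 1) * sn ^ α) * sn ^ (-α) := by ring
      _ ≤ C * sn ^ (-α) := mul_le_mul_of_nonneg_right h2 hsninv
  · -- large n : the main estimate
    have hS₀ : x₁ * c ^ (-(1/α')) ≤ sn := hN n hnN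
    set t : ℝ := (x₁ / sn) ^ α' with htdef
    have ht0 : 0 < t := Real.rpow_pos_of_pos (div_pos hx₁0 hsn0) _
    have htc : t ≤ c := by
      have hA : x₁ / sn ≤ c ^ (1/α') := by
        rw [div_le_iff₀ hsn0]
        have h1 : c ^ (1/α') * (x₁ * c ^ (-(1/α'))) = x₁ := by
          rw [mul_comm, mul_assoc, ← Real.rpow_add hc0]
          norm_num
        calc x₁ = c ^ (1/α') * (x₁ * c ^ (-(1/α'))) := h1.symm
          _ ≤ c ^ (1/α') * sn := mul_le_mul_of_nonneg_left hS₀ (Real.rpow_nonneg hc0.le _)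
      calc t = (x₁ / sn) ^ α' := htdef
        _ ≤ (c ^ (1/α')) ^ α' :=
            Real.rpow_le_rpow (div_nonneg hx₁0.le hsn0.le) hA hα'.le
        _ = c := by
            rw [← Real.rpow_mul hc0.le, one_div, inv_mul_cancel₀ (ne_of_gt hα'), Real.rpow_one]
    have ht1 : t < 1 := lt_of_le_of_lt htc hc1
    have htroot : t ^ (1/α') = x₁ / sn := by
      rw [htdef, ← Real.rpow_mul (div_nonneg hx₁0.le hsn0.le), mul_one_div,
        div_self (ne_of_gt hα'), Real.rpow_one]
    set ψ : ℝ → ℝ := fun q => q ^ (-γ) * φ q with hψdef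
    have hψmeas : Measurable ψ := (measurable_rpow_const_aux _).mul hφmeas
    set g : ℝ → ℝ := fun q => if q < t then M * q ^ p1 else (2 * C_X * sn ^ (-α)) * ψ q
      with hgdef
    -- pointwise bound f ≤ g on Ioo 0 1
    have hfleg : ∀ q ∈ Set.Ioo (0:ℝ) 1,
        q ^ (1 - ρ) * L (1 / q) * Fbar (sn * q ^ (1 / α')) ≤ g q := by
      intro q hq
      have hq0 : 0 < q := hq.1
      have harg : 0 < sn * q ^ (1/α') := mul_pos hsn0 (Real.rpow_pos_of_pos hq0 _)
      by_cases hqt : q < t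
      · simp only [hgdef]
        rw [if_pos hqt]
        have h1 : q ^ (1 - ρ) * L (1 / q) * Fbar (sn * q ^ (1/α')) ≤ φ q := by
          exact mul_le_of_le_one_right (hφnn q hq) (hFrange _ harg).2
        have hY' : Y ≤ 1/q := hcY q hq0 (le_trans hqt.le htc)
        have hL' : L (1/q) ≤ M * (1/q) ^ δ := hPotter _ hY'
        have h2 : φ q ≤ M * q ^ p1 := by
          have h3 : q ^ (1 - ρ) * L (1/q) ≤ q ^ (1 - ρ) * (M * (1/q) ^ δ) :=
            mul_le_mul_of_nonneg_left hL' (Real.rpow_nonneg hq0.le _)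
          have h4 : q ^ (1 - ρ) * (M * (1/q) ^ δ) = M * q ^ p1 := by
            rw [one_div, Real.inv_rpow hq0.le, ← Real.rpow_neg hq0.le, mul_left_comm,
              ← Real.rpow_add hq0]
            congr 1
          calc φ q = q ^ (1 - ρ) * L (1/q) := by rw [hφdef]
            _ ≤ q ^ (1 - ρ) * (M * (1/q) ^ δ) := h3
            _ = M * q ^ p1 := h4
        exact le_trans h1 h2
      · push_neg at hqt
        simp only [hgdef]
        rw [if_neg (not_lt.2 hqt)]
        have hq1' : t ^ (1/α') ≤ q ^ (1/α') :=
          Real.rpow_le_rpow ht0.le hqt (by positivity)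
        have hargx : x₁ ≤ sn * q ^ (1/α') := by
          have hsx : sn * t ^ (1/α') = x₁ := by
            rw [htroot]
            field_simp
          calc x₁ = sn * t ^ (1/α') := hsx.symm
            _ ≤ sn * q ^ (1/α') := mul_le_mul_of_nonneg_left hq1' hsn0.le
        have hFb := hx₁ _ hargx
        have hsplitpow : (sn * q ^ (1/α')) ^ (-α) = sn ^ (-α) * q ^ (-γ) := by
          rw [Real.mul_rpow hsn0.le (Real.rpow_nonneg hq0.le _), ← Real.rpow_mul hq0.le]
          congr 1
          rw [hγ]
          have hα'ne : α' ≠ 0 := ne_of_gt hα'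
          field_simp
        have h5 : Fbar (sn * q ^ (1/α')) ≤ 2 * C_X * (sn ^ (-α) * q ^ (-γ)) := by
          rw [← hsplitpow]
          exact hFb
        calc q ^ (1 - ρ) * L (1 / q) * Fbar (sn * q ^ (1/α'))
            ≤ q ^ (1 - ρ) * L (1 / q) * (2 * C_X * (sn ^ (-α) * q ^ (-γ))) :=
              mul_le_mul_of_nonneg_left h5 (hφnn q hq)
          _ = (2 * C_X * sn ^ (-α)) * ψ q := by
              simp only [hψdef, hφdef]
              ring
    -- integrability of the pieces
    have hint1 : IntegrableOn (fun q => M * q ^ p1) (Set.Ioo (0:ℝ) t) volume := by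
      have h1 : IntervalIntegrable (fun q : ℝ => q ^ p1) volume 0 t :=
        intervalIntegral.intervalIntegrable_rpow' hp1
      have h2 : IntegrableOn (fun q : ℝ => q ^ p1) (Set.Ioc (0:ℝ) t) volume :=
        (intervalIntegrable_iff_integrableOn_Ioc_of_le ht0.le).1 h1
      exact (h2.mono_set Set.Ioo_subset_Ioc_self).const_mul M
    have hsubt1 : Set.Ico t 1 ⊆ Set.Ioo (0:ℝ) 1 := fun q hq => ⟨lt_of_lt_of_le ht0 hq.1, hq.2⟩
    have hintψ : IntegrableOn ψ (Set.Ico t 1) volume := by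
      have hφ2 : IntegrableOn φ (Set.Ico t 1) volume := hφint.mono_set hsubt1
      refine (hφ2.const_mul (t ^ (-γ))).mono' hψmeas.aestronglyMeasurable ?_
      filter_upwards [ae_restrict_mem measurableSet_Ico] with q hq
      have hq0 : 0 < q := lt_of_lt_of_le ht0 hq.1
      have hqγ : q ^ (-γ) ≤ t ^ (-γ) := by
        rw [Real.rpow_neg hq0.le, Real.rpow_neg ht0.le]
        exact inv_anti₀ (Real.rpow_pos_of_pos ht0 _)
          (Real.rpow_le_rpow ht0.le hq.1 hγ0.le)
      have hφq : 0 ≤ φ q := hφnn q (hsubt1 hq)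
      have hψq : 0 ≤ ψ q := mul_nonneg (Real.rpow_nonneg hq0.le _) hφq
      rw [Real.norm_of_nonneg hψq]
      calc ψ q = q ^ (-γ) * φ q := by rw [hψdef]
        _ ≤ t ^ (-γ) * φ q := mul_le_mul_of_nonneg_right hqγ hφq
    have hsplit : Set.Ioo (0:ℝ) 1 = Set.Ioo 0 t ∪ Set.Ico t 1 :=
      (Set.Ioo_union_Ico_eq_Ioo ht0 ht1.le).symm
    have hdisj : Disjoint (Set.Ioo (0:ℝ) t) (Set.Ico t 1) :=
      Set.disjoint_left.2 fun q h1 h2 => absurd h2.1 (not_le.2 h1.2)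
    have hgint : IntegrableOn g (Set.Ioo (0:ℝ) 1) volume := by
      have hg1 : IntegrableOn g (Set.Ioo (0:ℝ) t) volume := by
        refine hint1.congr_fun (fun q hq => ?_) measurableSet_Ioo
        simp only [hgdef]
        rw [if_pos hq.2]
      have hg2 : IntegrableOn g (Set.Ico t 1) volume := by
        refine IntegrableOn.congr_fun (hintψ.const_mul (2 * C_X * sn ^ (-α)))
          (fun q hq => ?_) measurableSet_Ico
        simp only [hgdef]
        rw [if_neg (not_lt.2 hq.1)]
      rw [hsplit]
      exact hg1.union hg2
    -- step 1 : compare with g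
    have step1 : (∫ q in Set.Ioo (0:ℝ) 1,
        q ^ (1 - ρ) * L (1 / q) * Fbar (sn * q ^ (1 / α'))) ≤ ∫ q in Set.Ioo (0:ℝ) 1, g q := by
      refine integral_mono_of_nonneg (hfnn n hn) hgint ?_
      exact (ae_restrict_iff' measurableSet_Ioo).2 (ae_of_all _ hfleg)
    -- step 2 : split the integral of g
    have step2 : (∫ q in Set.Ioo (0:ℝ) 1, g q)
        = (∫ q in Set.Ioo (0:ℝ) t, g q) + ∫ q in Set.Ico t 1, g q := by
      rw [hsplit]
      have hsub1 : Set.Ioo (0:ℝ) t ⊆ Set.Ioo (0:ℝ) 1 := Set.Ioo_subset_Ioo le_rfl ht1.le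
      have hsub2 : Set.Ico t 1 ⊆ Set.Ioo (0:ℝ) 1 := fun q hq => ⟨lt_of_lt_of_le ht0 hq.1, hq.2⟩
      exact setIntegral_union hdisj measurableSet_Ico (hgint.mono_set hsub1)
        (hgint.mono_set hsub2)
    -- step 3 : first piece
    have step3 : (∫ q in Set.Ioo (0:ℝ) t, g q) ≤ (M * x₁ ^ α / (p1 + 1)) * sn ^ (-α) := by
      have h1 : (∫ q in Set.Ioo (0:ℝ) t, g q) = ∫ q in Set.Ioo (0:ℝ) t, M * q ^ p1 := by
        refine setIntegral_congr_fun measurableSet_Ioo (fun q hq => ?_)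
        simp only [hgdef]
        rw [if_pos hq.2]
      have h2 : (∫ q in Set.Ioo (0:ℝ) t, (q:ℝ) ^ p1) = t ^ (p1 + 1) / (p1 + 1) := by
        rw [← MeasureTheory.integral_Ioc_eq_integral_Ioo,
          ← intervalIntegral.integral_of_le ht0.le, integral_rpow (Or.inl hp1),
          Real.zero_rpow (by linarith : p1 + 1 ≠ 0)]
        ring
      have hαγ : α' * γ = α := by
        rw [hγ]
        field_simp
      have h5 : t ^ γ = x₁ ^ α * sn ^ (-α) := by
        rw [htdef, ← Real.rpow_mul (div_nonneg hx₁0.le hsn0.le), hαγ,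
          Real.div_rpow hx₁0.le hsn0.le, Real.rpow_neg hsn0.le, div_eq_mul_inv]
      have h4 : t ^ (p1 + 1) ≤ t ^ γ :=
        Real.rpow_le_rpow_of_exponent_ge ht0 ht1.le
          (by rw [hγdef, hp1def, hδdef]; linarith)
      have h3 : t ^ (p1 + 1) ≤ x₁ ^ α * sn ^ (-α) := h4.trans_eq h5
      have h7 : t ^ (p1 + 1) / (p1 + 1) ≤ (x₁ ^ α * sn ^ (-α)) / (p1 + 1) := by
        rw [div_eq_mul_inv, div_eq_mul_inv]
        exact mul_le_mul_of_nonneg_right h3 (inv_nonneg.2 hp1'.le)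
      calc (∫ q in Set.Ioo (0:ℝ) t, g q) = ∫ q in Set.Ioo (0:ℝ) t, M * q ^ p1 := h1
        _ = M * ∫ q in Set.Ioo (0:ℝ) t, (q:ℝ) ^ p1 := MeasureTheory.integral_const_mul _ _
        _ = M * (t ^ (p1 + 1) / (p1 + 1)) := by rw [h2]
        _ ≤ M * ((x₁ ^ α * sn ^ (-α)) / (p1 + 1)) := mul_le_mul_of_nonneg_left h7 hM0.le
        _ = (M * x₁ ^ α / (p1 + 1)) * sn ^ (-α) := by ring
    -- step 4 : second piece
    have step4 : (∫ q in Set.Ico t 1, g q)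
        ≤ 2 * C_X * (M * c ^ (p2 + 1) / (p2 + 1) + c ^ (-γ) * K) * sn ^ (-α) := by
      have hsubc1 : Set.Ico c 1 ⊆ Set.Ioo (0:ℝ) 1 := fun q hq => ⟨lt_of_lt_of_le hc0 hq.1, hq.2⟩
      have h1 : (∫ q in Set.Ico t 1, g q) = (2 * C_X * sn ^ (-α)) * ∫ q in Set.Ico t 1, ψ q := by
        rw [← MeasureTheory.integral_const_mul]
        refine setIntegral_congr_fun measurableSet_Ico (fun q hq => ?_)
        simp only [hgdef]
        rw [if_neg (not_lt.2 hq.1)]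
      have hsplit2 : Set.Ico t 1 = Set.Ico t c ∪ Set.Ico c 1 :=
        (Set.Ico_union_Ico_eq_Ico htc hc1.le).symm
      have hdisj2 : Disjoint (Set.Ico t c) (Set.Ico c 1) :=
        Set.disjoint_left.2 fun q h1 h2 => absurd h2.1 (not_le.2 h1.2)
      have hψa : IntegrableOn ψ (Set.Ico t c) volume :=
        hintψ.mono_set (Set.Ico_subset_Ico le_rfl hc1.le)
      have hψb : IntegrableOn ψ (Set.Ico c 1) volume :=
        hintψ.mono_set (Set.Ico_subset_Ico htc le_rfl)
      have hsplitint : (∫ q in Set.Ico t 1, ψ q)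
          = (∫ q in Set.Ico t c, ψ q) + ∫ q in Set.Ico c 1, ψ q := by
        rw [hsplit2]
        exact setIntegral_union hdisj2 measurableSet_Ico hψa hψb
      have hsubc : Set.Ico t c ⊆ Set.Ioc (0:ℝ) c := fun q hq =>
        ⟨lt_of_lt_of_le ht0 hq.1, hq.2.le⟩
      have hintp2 : IntegrableOn (fun q : ℝ => M * q ^ p2) (Set.Ioc (0:ℝ) c) volume :=
        ((intervalIntegrable_iff_integrableOn_Ioc_of_le hc0.le).1
          (intervalIntegral.intervalIntegrable_rpow' hp2)).const_mul M
      have hpa : (∫ q in Set.Ico t c, ψ q) ≤ M * c ^ (p2 + 1) / (p2 + 1) := by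
        have h2 : (∫ q in Set.Ico t c, ψ q) ≤ ∫ q in Set.Ico t c, M * q ^ p2 := by
          refine setIntegral_mono_on hψa (hintp2.mono_set hsubc) measurableSet_Ico ?_
          intro q hq
          have hq0 : 0 < q := lt_of_lt_of_le ht0 hq.1
          have hY' : Y ≤ 1/q := hcY q hq0 hq.2.le
          have hL' : L (1/q) ≤ M * (1/q) ^ δ := hPotter _ hY'
          have h3 : ψ q ≤ q ^ (-γ) * (q ^ (1 - ρ) * (M * (1/q) ^ δ)) := by
            simp only [hψdef, hφdef]
            exact mul_le_mul_of_nonneg_left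
              (mul_le_mul_of_nonneg_left hL' (Real.rpow_nonneg hq0.le _))
              (Real.rpow_nonneg hq0.le _)
          refine h3.trans (le_of_eq ?_)
          rw [one_div, Real.inv_rpow hq0.le, ← Real.rpow_neg hq0.le,
            show q ^ (-γ) * (q ^ (1 - ρ) * (M * q ^ (-δ)))
              = M * (q ^ (-γ) * q ^ (1 - ρ) * q ^ (-δ)) from by ring,
            ← Real.rpow_add hq0, ← Real.rpow_add hq0]
          congr 1
          rw [hp2def, hγdef]
          ring
        have h4 : (∫ q in Set.Ico t c, M * q ^ p2) ≤ ∫ q in Set.Ioc (0:ℝ) c, M * q ^ p2 := by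
          refine setIntegral_mono_set hintp2 ?_ (HasSubset.Subset.eventuallyLE hsubc)
          filter_upwards [ae_restrict_mem measurableSet_Ioc] with q hq
          exact mul_nonneg hM0.le (Real.rpow_nonneg hq.1.le _)
        have h5 : (∫ q in Set.Ioc (0:ℝ) c, M * q ^ p2) = M * c ^ (p2 + 1) / (p2 + 1) := by
          rw [← intervalIntegral.integral_of_le hc0.le, intervalIntegral.integral_const_mul,
            integral_rpow (Or.inl hp2), Real.zero_rpow (by linarith : p2 + 1 ≠ 0)]
          ring
        calc (∫ q in Set.Ico t c, ψ q) ≤ ∫ q in Set.Ico t c, M * q ^ p2 := h2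
          _ ≤ ∫ q in Set.Ioc (0:ℝ) c, M * q ^ p2 := h4
          _ = M * c ^ (p2 + 1) / (p2 + 1) := h5
      have hpb : (∫ q in Set.Ico c 1, ψ q) ≤ c ^ (-γ) * K := by
        have h2 : (∫ q in Set.Ico c 1, ψ q) ≤ ∫ q in Set.Ico c 1, c ^ (-γ) * φ q := by
          refine setIntegral_mono_on hψb ((hφint.mono_set hsubc1).const_mul _)
            measurableSet_Ico ?_
          intro q hq
          have hq0 : 0 < q := lt_of_lt_of_le hc0 hq.1
          have hqγ : q ^ (-γ) ≤ c ^ (-γ) := by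
            rw [Real.rpow_neg hq0.le, Real.rpow_neg hc0.le]
            exact inv_anti₀ (Real.rpow_pos_of_pos hc0 _)
              (Real.rpow_le_rpow hc0.le hq.1 hγ0.le)
          calc ψ q = q ^ (-γ) * φ q := by rw [hψdef]
            _ ≤ c ^ (-γ) * φ q := mul_le_mul_of_nonneg_right hqγ (hφnn q (hsubc1 hq))
        have h3 : (∫ q in Set.Ico c 1, c ^ (-γ) * φ q) = c ^ (-γ) * ∫ q in Set.Ico c 1, φ q :=
          MeasureTheory.integral_const_mul _ _
        have h4 : (∫ q in Set.Ico c 1, φ q) ≤ K := by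
          rw [hKdef]
          refine setIntegral_mono_set hφint ?_ (HasSubset.Subset.eventuallyLE hsubc1)
          filter_upwards [ae_restrict_mem measurableSet_Ioo] with q hq
          exact hφnn q hq
        calc (∫ q in Set.Ico c 1, ψ q) ≤ c ^ (-γ) * ∫ q in Set.Ico c 1, φ q := h2.trans_eq h3
          _ ≤ c ^ (-γ) * K := mul_le_mul_of_nonneg_left h4 (Real.rpow_nonneg hc0.le _)
      have hIψ : (∫ q in Set.Ico t 1, ψ q) ≤ M * c ^ (p2 + 1) / (p2 + 1) + c ^ (-γ) * K := by
        rw [hsplitint]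
        exact add_le_add hpa hpb
      have hcs : 0 ≤ 2 * C_X * sn ^ (-α) := mul_nonneg (by linarith) hsninv
      calc (∫ q in Set.Ico t 1, g q)
          = (2 * C_X * sn ^ (-α)) * ∫ q in Set.Ico t 1, ψ q := h1
        _ ≤ (2 * C_X * sn ^ (-α)) * (M * c ^ (p2 + 1) / (p2 + 1) + c ^ (-γ) * K) :=
            mul_le_mul_of_nonneg_left hIψ hcs
        _ = 2 * C_X * (M * c ^ (p2 + 1) / (p2 + 1) + c ^ (-γ) * K) * sn ^ (-α) := by ring
    have hC₀C : C₀ ≤ C := by rw [hCdef]; linarith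
    calc (∫ q in Set.Ioo (0:ℝ) 1,
        q ^ (1 - ρ) * L (1 / q) * Fbar (sn * q ^ (1 / α')))
        ≤ (∫ q in Set.Ioo (0:ℝ) t, g q) + ∫ q in Set.Ico t 1, g q := by
          rw [← step2]; exact step1
      _ ≤ (M * x₁ ^ α / (p1 + 1)) * sn ^ (-α)
          + 2 * C_X * (M * c ^ (p2 + 1) / (p2 + 1) + c ^ (-γ) * K) * sn ^ (-α) := by
          exact add_le_add step3 step4
      _ = (M * x₁ ^ α / (p1 + 1)
          + 2 * C_X * (M * c ^ (p2 + 1) / (p2 + 1) + c ^ (-γ) * K)) * sn ^ (-α) := by ring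
      _ ≤ C₀ * sn ^ (-α) :=
          mul_le_mul_of_nonneg_right (by rw [hC₀def]; linarith) hsninv
      _ ≤ C * sn ^ (-α) := mul_le_mul_of_nonneg_right hC₀C hsninv
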